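/- Let K be a Tamari interval and s a segment of the left border of max(K). If the interval Y *_s K is new, then any decomposition of K into new intervals is of the form K_1 / ... / K_k with each K_i new, i.e., all graftings occur along the left border. -/

import Mathlib

/-- Planar binary trees, counted by internal nodes. -/
inductive PBT where
  | leaf : PBT
  | node : PBT → PBT → PBT
deriving DecidableEq

namespace PBT

/-- Number of internal nodes. -/
def size : PBT → ℕ
  | leaf => 0
  | node l r => size l + size r + 1

/-- One rotation step, going up in the Tamari order: a right comb
configuration `a·(b·c)` is replaced by a left comb configuration `(a·b)·c`,
possibly deep inside the tree. -/
inductive Rot : PBT → PBT → Prop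
  | rotate (a b c : PBT) : Rot (node a (node b c)) (node (node a b) c)
  | left {l l' : PBT} (r : PBT) : Rot l l' → Rot (node l r) (node l' r)
  | right (l : PBT) {r r' : PBT} : Rot r r' → Rot (node l r) (node l r')

/-- The Tamari order: the reflexive-transitive closure of rotation. -/
def le (S T : PBT) : Prop := Relation.ReflTransGen Rot S T

/-- The unique tree with one internal node. -/
def Y : PBT := node leaf leaf

/-- `S / T`: graft the root of `S` onto the leftmost leaf of `T`. -/
def graftL : PBT → PBT → PBT
  | S, leaf => S
  | S, node l r => node (graftL S l) r

/-- `T₁ / T₂ / ⋯ / T_k` for a list of trees (the empty graft is the trivial tree). -/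
def listGraft (L : List PBT) : PBT := L.foldr graftL leaf

/-- A (nontrivial) tree is indecomposable if it is not of the form `S / T`
with `S`, `T` both nontrivial. -/
def Indec (T : PBT) : Prop :=
  T ≠ leaf ∧ ¬ ∃ S U : PBT, S ≠ leaf ∧ U ≠ leaf ∧ graftL S U = T

end PBT

/-- A pair `(S,T)` is a Tamari interval when `S ≤ T`. -/
def isItv (p : PBT × PBT) : Prop := PBT.le p.1 p.2

/-- Grafting of intervals, componentwise on minima and maxima:
`J/K = [min J / min K, max J / max K]`. -/
def igraft (p q : PBT × PBT) : PBT × PBT := (PBT.graftL p.1 q.1, PBT.graftL p.2 q.2)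

/-- `I₁ / I₂ / ⋯ / I_k` for a list of intervals. -/
def ilistGraft (L : List (PBT × PBT)) : PBT × PBT := L.foldr igraft (PBT.leaf, PBT.leaf)

/-- An interval is indecomposable if it is nontrivial and is not the graft `J/K`
of two nontrivial intervals. -/
def IndecItv (p : PBT × PBT) : Prop :=
  isItv p ∧ p.1 ≠ PBT.leaf ∧
    ¬ ∃ q r : PBT × PBT, isItv q ∧ isItv r ∧ q.1 ≠ PBT.leaf ∧ r.1 ≠ PBT.leaf ∧
      igraft q r = p

namespace PBT

/-- `Lb T`: the number of segments along the left border of `T`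
(the edges on the path from the root to the leftmost leaf); `Lb Y = 2`. -/
def Lb : PBT → ℕ
  | leaf => 1
  | node l _ => Lb l + 1

/-- `addLeft s T`: attach a new left edge at segment `s` (numbered from the root,
starting at `0`) of the left border of `T`. -/
def addLeft : ℕ → PBT → PBT
  | 0, T => node leaf T
  | _ + 1, leaf => leaf
  | s + 1, node l r => node (addLeft s l) r

end PBT

namespace PBT

/-- Number of leaves of a planar binary tree. -/
def nleaves : PBT → ℕ
  | leaf => 1
  | node l r => nleaves l + nleaves r

/-- Simultaneous substitution of the list `L` of trees for the leaves of `T`,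
from left to right (`leaf` entries leave the corresponding leaf unchanged). -/
def subst : PBT → List PBT → PBT
  | leaf, L => L.headD leaf
  | node l r, L => node (subst l (L.take (nleaves l))) (subst r (L.drop (nleaves l)))

end PBT

mutual
/-- A grafting scheme `G(T,(I_s)_s)`: a planar tree whose internal vertices are
decorated by Tamari intervals `(S,T)`, with one (possibly absent) subtree above
each leaf of the decorating interval. -/
inductive GT where
  | node : PBT → PBT → GTL → GT
/-- The list of children of a vertex of a grafting scheme: each position is
either a leaf of the planar tree (`consLeaf`) or a further internal vertex
(`consNode`). -/
inductive GTL where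
  | nil : GTL
  | consLeaf : GTL → GTL
  | consNode : GT → GTL → GTL
end

mutual
/-- Evaluation of a grafting scheme: graft the minima (resp. the maxima) of the
decorating intervals according to the planar tree, producing a pair of trees. -/
def evalGT : GT → PBT × PBT
  | .node S T cs =>
      (PBT.subst S ((evalL cs).map Prod.fst), PBT.subst T ((evalL cs).map Prod.snd))
def evalL : GTL → List (PBT × PBT)
  | .nil => []
  | .consLeaf cs => (PBT.leaf, PBT.leaf) :: evalL cs
  | .consNode g cs => evalGT g :: evalL cs
end

mutual
/-- Number of internal vertices of a grafting scheme. -/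
def numNodes : GT → ℕ
  | .node _ _ cs => 1 + numNodesL cs
def numNodesL : GTL → ℕ
  | .nil => 0
  | .consLeaf cs => numNodesL cs
  | .consNode g cs => numNodes g + numNodesL cs
end

/-- Length of a children list. -/
def lenGTL : GTL → ℕ
  | .nil => 0
  | .consLeaf cs => lenGTL cs + 1
  | .consNode _ cs => lenGTL cs + 1

mutual
/-- Well-formedness of a grafting scheme: every decoration `(S,T)` is a
nontrivial Tamari interval and has exactly one child position per leaf. -/
inductive WFGT : GT → Prop
  | node {S T : PBT} {cs : GTL} : PBT.le S T → S ≠ PBT.leaf →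
      lenGTL cs = PBT.nleaves S → WFL cs → WFGT (.node S T cs)
inductive WFL : GTL → Prop
  | nil : WFL .nil
  | consLeaf {cs : GTL} : WFL cs → WFL (.consLeaf cs)
  | consNode {g : GT} {cs : GTL} : WFGT g → WFL cs → WFL (.consNode g cs)
end

/-- A Tamari interval is new if it is not the evaluation of a well-formed
grafting scheme with at least two internal vertices. -/
def NewItv (p : PBT × PBT) : Prop :=
  isItv p ∧ p.1 ≠ PBT.leaf ∧
    ¬ ∃ G : GT, WFGT G ∧ 2 ≤ numNodes G ∧ evalGT G = p

mutual
/-- All decorating intervals of the grafting scheme are new. -/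
inductive AllNewGT : GT → Prop
  | node {S T : PBT} {cs : GTL} : NewItv (S, T) → AllNewL cs → AllNewGT (.node S T cs)
inductive AllNewL : GTL → Prop
  | nil : AllNewL .nil
  | consLeaf {cs : GTL} : AllNewL cs → AllNewL (.consLeaf cs)
  | consNode {g : GT} {cs : GTL} : AllNewGT g → AllNewL cs → AllNewL (.consNode g cs)
end

/-- A children list with no internal vertex. -/
def allLeafL : GTL → Prop
  | .nil => True
  | .consLeaf cs => allLeafL cs
  | .consNode _ _ => False

/-- A grafting scheme is a left comb when all graftings occur along the left
border: at each vertex at most the leftmost child is internal, i.e. the scheme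
describes a decomposition `K₁ / ⋯ / K_k`. -/
inductive LeftComb : GT → Prop
  | base {S T : PBT} {cs : GTL} : allLeafL cs → LeftComb (.node S T cs)
  | step {S T : PBT} {g : GT} {cs : GTL} : LeftComb g → allLeafL cs →
      LeftComb (.node S T (.consNode g cs))

namespace PBT

theorem nleaves_pos (T : PBT) : 1 ≤ nleaves T := by
  induction T with
  | leaf => exact Nat.le_refl 1
  | node l r ihl ihr => simp only [nleaves]; omega

theorem size_rot {S T : PBT} (h : Rot S T) : size S = size T := by
  induction h with
  | rotate a b c => simp only [size]; omega
  | left r _ ih => simp only [size]; omega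
  | right l _ ih => simp only [size]; omega

theorem size_le {S T : PBT} (h : le S T) : size S = size T := by
  induction h with
  | refl => rfl
  | tail _ h2 ih => exact ih.trans (size_rot h2)

theorem nleaves_eq_size (T : PBT) : nleaves T = size T + 1 := by
  induction T with
  | leaf => rfl
  | node l r ihl ihr => simp only [nleaves, size]; omega

theorem nleaves_le {S T : PBT} (h : le S T) : nleaves S = nleaves T := by
  rw [nleaves_eq_size, nleaves_eq_size, size_le h]

theorem le_refl (T : PBT) : le T T := Relation.ReflTransGen.refl

theorem le_trans {S T U : PBT} (h1 : le S T) (h2 : le T U) : le S U :=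
  Relation.ReflTransGen.trans h1 h2

theorem le_node_left {x y : PBT} (r : PBT) (h : le x y) : le (node x r) (node y r) := by
  induction h with
  | refl => exact le_refl _
  | tail _ h2 ih => exact ih.tail (Rot.left r h2)

theorem le_node_right (l : PBT) {x y : PBT} (h : le x y) : le (node l x) (node l y) := by
  induction h with
  | refl => exact le_refl _
  | tail _ h2 ih => exact ih.tail (Rot.right l h2)

theorem le_node {l l' r r' : PBT} (h1 : le l l') (h2 : le r r') :
    le (node l r) (node l' r') :=
  le_trans (le_node_left r h1) (le_node_right l' h2)

theorem subst_leaves {L : List PBT} (T : PBT) (h : ∀ x ∈ L, x = leaf) :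
    subst T L = T := by
  induction T generalizing L with
  | leaf =>
    cases L with
    | nil => rfl
    | cons a l => simp [subst, h a (by simp : a ∈ a :: l)]
  | node l r ihl ihr =>
    simp only [subst]
    rw [ihl fun x hx => h x (List.take_subset _ _ hx),
        ihr fun x hx => h x (List.drop_subset _ _ hx)]

theorem subst_congr {L1 L2 : List PBT} (T : PBT)
    (h : ∀ i, L1.getD i leaf = L2.getD i leaf) : subst T L1 = subst T L2 := by
  induction T generalizing L1 L2 with
  | leaf =>
    have := h 0
    cases L1 <;> cases L2 <;> simpa [subst] using this
  | node l r ihl ihr =>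
    simp only [subst]
    rw [ihl (L1 := L1.take (nleaves l)) (L2 := L2.take (nleaves l)) ?_,
        ihr (L1 := L1.drop (nleaves l)) (L2 := L2.drop (nleaves l)) ?_]
    · intro i
      simp only [List.getD_eq_getElem?_getD, List.getElem?_drop]
      have := h (nleaves l + i)
      simpa [List.getD_eq_getElem?_getD] using this
    · intro i
      simp only [List.getD_eq_getElem?_getD, List.getElem?_take]
      by_cases hi : i < nleaves l
      · simp only [if_pos hi]
        have := h i
        simpa [List.getD_eq_getElem?_getD] using this
      · simp [if_neg hi]

theorem subst_nil (T : PBT) : subst T [] = T := subst_leaves T (by simp)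

theorem subst_append_replicate (T : PBT) (L : List PBT) (r : ℕ) :
    subst T (L ++ List.replicate r leaf) = subst T L := by
  apply subst_congr
  intro i
  simp only [List.getD_eq_getElem?_getD, List.getElem?_append]
  by_cases hi : i < L.length
  · simp [hi]
  · rw [if_neg hi]
    rcases Nat.lt_or_ge (i - L.length) r with h | h
    · simp [List.getElem?_replicate, h, List.getElem?_eq_none (Nat.le_of_not_lt hi)]
    · simp [List.getElem?_replicate, Nat.not_lt.2 h, List.getElem?_eq_none (Nat.le_of_not_lt hi)]

theorem nleaves_subst {L : List PBT} (T : PBT) (h : L.length = nleaves T) :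
    nleaves (subst T L) = (L.map nleaves).sum := by
  induction T generalizing L with
  | leaf =>
    cases L with
    | nil => simp [nleaves] at h
    | cons a l =>
      simp only [nleaves, List.length_cons] at h
      have : l = [] := List.eq_nil_of_length_eq_zero (by omega)
      subst this; simp [subst]
  | node l r ihl ihr =>
    simp only [subst, nleaves] at h ⊢
    rw [ihl (by rw [List.length_take]; omega),
        ihr (by rw [List.length_drop]; omega)]
    rw [← List.sum_append, ← List.map_append, List.take_append_drop]

theorem headD_take {L : List PBT} {n : ℕ} (h : 1 ≤ n) :
    (L.take n).headD leaf = L.headD leaf := by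
  cases L with
  | nil => simp
  | cons a l =>
    obtain ⟨k, rfl⟩ : ∃ k, n = k + 1 := ⟨n - 1, by omega⟩
    simp [List.take_succ_cons]

theorem Lb_subst (T : PBT) (L : List PBT) :
    Lb (subst T L) + 1 = Lb T + Lb (L.headD leaf) := by
  induction T generalizing L with
  | leaf => simp [subst, Lb]; omega
  | node l r ihl ihr =>
    simp only [subst, Lb]
    rw [Nat.add_assoc, Nat.add_comm 1, ← Nat.add_assoc, ihl,
        headD_take (nleaves_pos l)]
    omega

theorem nleaves_graftL (a T : PBT) : nleaves (graftL a T) + 1 = nleaves a + nleaves T := by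
  induction T with
  | leaf => simp [graftL, nleaves]
  | node l r ihl ihr => simp only [graftL, nleaves]; omega

theorem Lb_graftL (a T : PBT) : Lb (graftL a T) + 1 = Lb a + Lb T := by
  induction T with
  | leaf => simp [graftL, Lb]
  | node l r ihl ihr => simp only [graftL, Lb]; omega

theorem graftL_eq_subst (a T : PBT) : graftL a T = subst T [a] := by
  induction T with
  | leaf => rfl
  | node l r ihl ihr =>
    simp only [graftL, subst]
    rw [List.take_of_length_le (by simpa using nleaves_pos l),
        List.drop_eq_nil_of_le (by simpa using nleaves_pos l), subst_nil, ihl]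

theorem rot_subst {S S' : PBT} (h : Rot S S') (L : List PBT) :
    Rot (subst S L) (subst S' L) := by
  induction h generalizing L with
  | rotate a b c =>
    simp only [subst, nleaves]
    rw [List.take_take, Nat.min_eq_left (Nat.le_add_right _ _),
        List.drop_take, Nat.add_sub_cancel_left, List.drop_drop]
    exact Rot.rotate _ _ _
  | left r hl ih =>
    rename_i l l'
    simp only [subst]
    have hn : nleaves l' = nleaves l := by
      rw [nleaves_eq_size, nleaves_eq_size, size_rot hl]
    rw [hn]
    exact Rot.left _ (ih _)
  | right l hr ih =>
    simp only [subst]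
    exact Rot.right _ (ih _)

theorem le_subst_left {S T : PBT} (h : le S T) (L : List PBT) :
    le (subst S L) (subst T L) := by
  induction h with
  | refl => exact le_refl _
  | tail _ h2 ih => exact ih.tail (rot_subst h2 L)

theorem le_subst_right {L1 L2 : List PBT} (T : PBT)
    (h : ∀ i, le (L1.getD i leaf) (L2.getD i leaf)) :
    le (subst T L1) (subst T L2) := by
  induction T generalizing L1 L2 with
  | leaf =>
    have := h 0
    cases L1 <;> cases L2 <;> simpa [subst] using this
  | node l r ihl ihr =>
    simp only [subst]
    apply le_node
    · apply ihl
      intro i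
      simp only [List.getD_eq_getElem?_getD, List.getElem?_take]
      by_cases hi : i < nleaves l
      · simp only [if_pos hi]
        have := h i
        simpa [List.getD_eq_getElem?_getD] using this
      · simp [if_neg hi, le_refl]
    · apply ihr
      intro i
      simp only [List.getD_eq_getElem?_getD, List.getElem?_drop]
      have := h (nleaves l + i)
      simpa [List.getD_eq_getElem?_getD] using this

theorem graft_mono {a b S T : PBT} (hab : le a b) (hST : le S T) :
    le (graftL a S) (graftL b T) := by
  rw [graftL_eq_subst, graftL_eq_subst]
  refine le_trans (le_subst_left hST [a]) (le_subst_right T ?_)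
  intro i
  match i with
  | 0 => exact hab
  | i + 1 => exact le_refl _

theorem nleaves_addLeft {s : ℕ} {T : PBT} (h : s < Lb T) :
    nleaves (addLeft s T) = nleaves T + 1 := by
  induction T generalizing s with
  | leaf =>
    have : s = 0 := by simpa [Lb] using h
    subst this; rfl
  | node l r ihl ihr =>
    cases s with
    | zero => simp [addLeft, nleaves]; omega
    | succ s =>
      simp only [Lb] at h
      have h' : s < Lb l := by omega
      simp only [addLeft, nleaves, ihl h']
      omega

theorem subst_addLeft {s : ℕ} {T : PBT} (h : s < Lb T) (L : List PBT) :
    subst (addLeft s T) (leaf :: L) = addLeft s (subst T L) := by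
  induction T generalizing s L with
  | leaf =>
    have : s = 0 := by simpa [Lb] using h
    subst this
    simp [addLeft, subst, nleaves]
  | node l r ihl ihr =>
    cases s with
    | zero => simp [addLeft, subst, nleaves]
    | succ s =>
      simp only [Lb] at h
      have h' : s < Lb l := by omega
      simp only [addLeft, subst, nleaves_addLeft h', nleaves]
      rw [List.take_succ_cons, List.drop_succ_cons, ihl h']

theorem addLeft_ge : ∀ (T : PBT) (s : ℕ), s < Lb T → le (node leaf T) (addLeft s T)
  | _, 0, _ => le_refl _
  | leaf, s+1, h => absurd h (by simp [Lb])
  | node l r, s+1, h => by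
    simp only [Lb] at h
    refine Relation.ReflTransGen.head (Rot.rotate leaf l r) ?_
    exact le_node_left r (addLeft_ge l s (by omega))

theorem subst_cons_graft (T : PBT) (m : PBT) (L : List PBT) :
    subst T (m :: L) = graftL m (subst T (leaf :: L)) := by
  induction T generalizing L with
  | leaf => simp [subst, graftL]
  | node l r ihl ihr =>
    obtain ⟨k, hk⟩ : ∃ k, nleaves l = k + 1 := ⟨nleaves l - 1, by have := nleaves_pos l; omega⟩
    simp only [subst, hk, List.take_succ_cons, List.drop_succ_cons, graftL]
    rw [ihl]

theorem subst_node_leaf (A x : PBT) (L : List PBT) :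
    subst (node leaf A) (x :: L) = node x (subst A L) := by
  simp [subst, nleaves]

/-- replace the `p`-th leaf of `T` by `m`. -/
def substOne (T : PBT) (p : ℕ) (m : PBT) : PBT :=
  subst T (List.replicate p leaf ++ [m])

theorem graftL_substOne {a : PBT} {p : ℕ} (S : PBT) (m : PBT) (hp : p < nleaves a) :
    substOne (graftL a S) p m = graftL (substOne a p m) S := by
  induction S with
  | leaf => rfl
  | node l r ihl ihr =>
    have hlen : (List.replicate p leaf ++ [m]).length = p + 1 := by simp
    have hle : p + 1 ≤ nleaves (graftL a l) := by
      have := nleaves_graftL a l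
      have := nleaves_pos l
      omega
    simp only [graftL, substOne, subst]
    rw [List.take_of_length_le (by omega), List.drop_eq_nil_of_le (by omega), subst_nil]
    exact congrArg (fun x => node x r) ihl

/-- offset of the `j`-th entry of `L` in leaf positions. -/
def off (L : List PBT) (j : ℕ) : ℕ := ((L.take j).map nleaves).sum

theorem off_pos {L : List PBT} {j : ℕ} (hj : 1 ≤ j) (hL : L ≠ []) : 1 ≤ off L j := by
  cases L with
  | nil => exact absurd rfl hL
  | cons a l =>
    obtain ⟨k, rfl⟩ : ∃ k, j = k + 1 := ⟨j - 1, by omega⟩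
    simp only [off, List.take_succ_cons, List.map_cons, List.sum_cons]
    have := nleaves_pos a
    omega

theorem off_lt {L : List PBT} {j : ℕ} (hj : j < L.length) :
    off L j < (L.map nleaves).sum := by
  have hsplit : (L.map nleaves).sum
      = off L j + ((L.drop j).map nleaves).sum := by
    rw [off, ← List.sum_append, ← List.map_append, List.take_append_drop]
  have hne : L.drop j ≠ [] := by
    intro hcon
    have hl := List.length_drop (i := j) (l := L)
    rw [hcon] at hl
    simp at hl
    omega
  have hpos : 1 ≤ ((L.drop j).map nleaves).sum := by
    cases hd : L.drop j with
    | nil => exact absurd hd hne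
    | cons a l =>
      simp only [List.map_cons, List.sum_cons]
      have := nleaves_pos a
      omega
  omega

theorem off_take {L : List PBT} {j n : ℕ} (h : j ≤ n) :
    off (L.take n) j = off L j := by
  simp [off, List.take_take, Nat.min_eq_left h]

theorem off_add {L : List PBT} {j n : ℕ} (h : n ≤ j) :
    off L j = ((L.take n).map nleaves).sum + off (L.drop n) (j - n) := by
  rw [off, off, ← List.sum_append, ← List.map_append]
  congr 1
  rw [← List.take_append_drop n (L.take j), List.take_take,
      Nat.min_eq_left h, List.drop_take]

theorem substOne_node_left {X : PBT} {p : ℕ} (Y m : PBT) (hp : p < nleaves X) :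
    substOne (node X Y) p m = node (substOne X p m) Y := by
  have hlen : (List.replicate p leaf ++ [m]).length = p + 1 := by simp
  simp only [substOne, subst]
  rw [List.take_of_length_le (by omega), List.drop_eq_nil_of_le (by omega), subst_nil]

theorem substOne_node_right {X : PBT} {p : ℕ} (Y m : PBT) (hp : nleaves X ≤ p) :
    substOne (node X Y) p m = node X (substOne Y (p - nleaves X) m) := by
  have hlen : (List.replicate p leaf : List PBT).length = p := by simp
  simp only [substOne, subst]
  rw [List.take_append_of_le_length (by omega), List.drop_append_of_le_length (by omega),
      List.take_replicate, List.drop_replicate, Nat.min_eq_left hp,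
      subst_leaves X (by intro x hx; exact (List.eq_of_mem_replicate hx))]

theorem subst_one : ∀ (T : PBT) (L : List PBT) (j : ℕ) (m : PBT),
    L.length = nleaves T → j < L.length → L.getD j leaf = leaf →
    subst T (L.set j m) = substOne (subst T L) (off L j) m := by
  intro T
  induction T with
  | leaf =>
    intro L j m hlen hj hget
    match L, j with
    | [x], 0 =>
      simp only [List.getD_cons_zero] at hget
      subst hget
      rfl
  | node l r ihl ihr =>
    intro L j m hlen hj hget
    simp only [nleaves, List.length_cons] at hlen
    have hr1 := nleaves_pos r
    have hl1 := nleaves_pos l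
    have hnl : nleaves l ≤ L.length := by omega
    rcases Nat.lt_or_ge j (nleaves l) with hlt | hge
    · -- j in the left part
      have htake : (L.set j m).take (nleaves l) = (L.take (nleaves l)).set j m :=
        List.take_set
      have hdrop : (L.set j m).drop (nleaves l) = L.drop (nleaves l) :=
        List.drop_set_of_lt hlt
      simp only [subst, htake, hdrop]
      rw [ihl (L.take (nleaves l)) j m (by rw [List.length_take]; omega)
          (by rw [List.length_take]; omega)
          (by simp only [List.getD_eq_getElem?_getD, List.getElem?_take, if_pos hlt] at hget ⊢
              exact hget)]
      rw [off_take (Nat.le_of_lt hlt)]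
      have hX : nleaves (subst l (L.take (nleaves l))) = ((L.take (nleaves l)).map nleaves).sum :=
        nleaves_subst l (by rw [List.length_take]; omega)
      have hplt : off L j < nleaves (subst l (L.take (nleaves l))) := by
        rw [hX, ← off_take (L := L) (Nat.le_of_lt hlt)]
        exact off_lt (by rw [List.length_take]; omega)
      rw [substOne_node_left _ _ hplt]
    · -- j in the right part
      have htake : (L.set j m).take (nleaves l) = L.take (nleaves l) := by
        rw [List.take_set, List.set_eq_of_length_le (by rw [List.length_take]; omega)]
      have hdrop : (L.set j m).drop (nleaves l) = (L.drop (nleaves l)).set (j - nleaves l) m := by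
        rw [List.drop_set, if_neg (by omega)]
      simp only [subst, htake, hdrop]
      rw [ihr (L.drop (nleaves l)) (j - nleaves l) m (by rw [List.length_drop]; omega)
          (by rw [List.length_drop]; omega)
          (by simp only [List.getD_eq_getElem?_getD, List.getElem?_drop] at hget ⊢
              rw [show nleaves l + (j - nleaves l) = j by omega]
              exact hget)]
      have hX : nleaves (subst l (L.take (nleaves l))) = ((L.take (nleaves l)).map nleaves).sum :=
        nleaves_subst l (by rw [List.length_take]; omega)
      have hoff : off L j = nleaves (subst l (L.take (nleaves l))) + off (L.drop (nleaves l)) (j - nleaves l) := by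
        rw [hX]; exact off_add hge
      rw [substOne_node_right _ _ (by omega), hoff, Nat.add_sub_cancel_left]

end PBT

section SchemeLemmas

open PBT (leaf node)

theorem length_evalL : ∀ cs : GTL, (evalL cs).length = lenGTL cs
  | .nil => rfl
  | .consLeaf cs => by simp [evalL, lenGTL, length_evalL cs]
  | .consNode g cs => by simp [evalL, lenGTL, length_evalL cs]

theorem allLeaf_evalL : ∀ cs : GTL, allLeafL cs → ∀ pr ∈ evalL cs, pr = (leaf, leaf)
  | .nil, _ => by simp [evalL]
  | .consLeaf cs, h => by
    intro pr hpr
    simp only [evalL, List.mem_cons] at hpr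
    rcases hpr with rfl | hpr
    · rfl
    · exact allLeaf_evalL cs h pr hpr
  | .consNode g cs, h => absurd h (by simp [allLeafL])

theorem pointwise_le {E : List (PBT × PBT)} (h : ∀ pr ∈ E, PBT.le pr.1 pr.2) :
    ∀ i, PBT.le ((E.map Prod.fst).getD i leaf) ((E.map Prod.snd).getD i leaf) := by
  induction E with
  | nil => intro i; simp only [List.map_nil, List.getD_nil]; exact PBT.le_refl _
  | cons pr E ih =>
    intro i
    cases i with
    | zero => simpa using h pr (by simp)
    | succ i => simpa using ih (fun q hq => h q (by simp [hq])) i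

mutual
theorem wf_le : ∀ {G : GT}, WFGT G → PBT.le (evalGT G).1 (evalGT G).2
  | .node S T cs, h => by
    cases h with
    | node hST hS hlen hW =>
      simp only [evalGT]
      exact PBT.le_trans (PBT.le_subst_right S (pointwise_le (wfl_le hW)))
        (PBT.le_subst_left hST _)

theorem wfl_le : ∀ {cs : GTL}, WFL cs → ∀ pr ∈ evalL cs, PBT.le pr.1 pr.2
  | .nil, _, pr, hpr => by simp [evalL] at hpr
  | .consLeaf cs, h, pr, hpr => by
    cases h with
    | consLeaf h' =>
      simp only [evalL, List.mem_cons] at hpr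
      rcases hpr with rfl | hpr
      · exact PBT.le_refl _
      · exact wfl_le h' pr hpr
  | .consNode g cs, h, pr, hpr => by
    cases h with
    | consNode hg h' =>
      simp only [evalL, List.mem_cons] at hpr
      rcases hpr with rfl | hpr
      · exact wf_le hg
      · exact wfl_le h' pr hpr
end

theorem wf_min_ne : ∀ {G : GT}, WFGT G → (evalGT G).1 ≠ leaf
  | .node S T cs, h => by
    cases h with
    | node hST hS hlen hW =>
      cases S with
      | leaf => exact absurd rfl hS
      | node l r =>
        intro hcon
        simp [evalGT, PBT.subst] at hcon

theorem wfl_nleaves {cs : GTL} (h : WFL cs) :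
    ∀ pr ∈ evalL cs, PBT.nleaves pr.1 = PBT.nleaves pr.2 :=
  fun pr hpr => PBT.nleaves_le (wfl_le h pr hpr)

theorem off_eq {E : List (PBT × PBT)} (h : ∀ pr ∈ E, PBT.nleaves pr.1 = PBT.nleaves pr.2)
    (j : ℕ) : PBT.off (E.map Prod.fst) j = PBT.off (E.map Prod.snd) j := by
  simp only [PBT.off, ← List.map_take, List.map_map]
  exact congrArg List.sum (List.map_congr_left fun pr hpr =>
    h pr (List.take_subset _ _ hpr))

theorem headD_set {α : Type*} (l : List α) (k : ℕ) (a d : α) :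
    (l.set (k+1) a).headD d = l.headD d := by
  cases l <;> simp

/-- extraction data: `A` and `B` are obtained from a smaller interval by
substituting an interval `(m,M)` at a common non-leftmost leaf `p`. -/
def ExtAt (A B : PBT) : Prop :=
  ∃ p m M Am Bm, 1 ≤ p ∧ p < PBT.nleaves Am ∧ m ≠ leaf ∧ PBT.le m M ∧
    PBT.le Am Bm ∧ PBT.Lb Bm = PBT.Lb B ∧
    PBT.substOne Am p m = A ∧ PBT.substOne Bm p M = B

theorem ext_graft {a b S T : PBT} (hST : PBT.le S T) (h : ExtAt a b) :
    ExtAt (PBT.graftL a S) (PBT.graftL b T) := by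
  obtain ⟨p, m, M, Am, Bm, hp1, hplt, hm, hmM, hAB, hLb, hA, hB⟩ := h
  refine ⟨p, m, M, PBT.graftL Am S, PBT.graftL Bm T, hp1, ?_, hm, hmM,
    PBT.graft_mono hAB hST, ?_, ?_, ?_⟩
  · have h1 := PBT.nleaves_graftL Am S
    have h2 := PBT.nleaves_pos S
    omega
  · have h1 := PBT.Lb_graftL Bm T
    have h2 := PBT.Lb_graftL b T
    omega
  · rw [PBT.graftL_substOne S m hplt, hA]
  · rw [PBT.graftL_substOne T M (by rw [PBT.nleaves_le hAB] at hplt; exact hplt), hB]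

theorem zap : ∀ cs : GTL, WFL cs → ¬ allLeafL cs →
    ∃ (csm : GTL) (j : ℕ) (m M : PBT), WFL csm ∧ lenGTL csm = lenGTL cs ∧
      j < lenGTL cs ∧ m ≠ leaf ∧ PBT.le m M ∧
      (evalL cs).map Prod.fst = ((evalL csm).map Prod.fst).set j m ∧
      (evalL cs).map Prod.snd = ((evalL csm).map Prod.snd).set j M ∧
      ((evalL csm).map Prod.fst).getD j leaf = leaf ∧
      ((evalL csm).map Prod.snd).getD j leaf = leaf
  | .nil, _, hall => absurd trivial hall
  | .consLeaf cs, h, hall => by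
    cases h with
    | consLeaf h' =>
      obtain ⟨csm, j, m, M, a1, a2, a3, a4, a5, a6, a7, a8, a9⟩ :=
        zap cs h' (fun hc => hall hc)
      exact ⟨.consLeaf csm, j+1, m, M, .consLeaf a1, by simp [lenGTL, a2],
        by simp only [lenGTL]; omega, a4, a5,
        by simp [evalL, a6], by simp [evalL, a7],
        by simpa [evalL] using a8, by simpa [evalL] using a9⟩
  | .consNode g cs, h, _ => by
    cases h with
    | consNode hg h' =>
      exact ⟨.consLeaf cs, 0, (evalGT g).1, (evalGT g).2, .consLeaf h',
        by simp [lenGTL], by simp [lenGTL], wf_min_ne hg, wf_le hg,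
        by simp [evalL], by simp [evalL],
        by simp [evalL], by simp [evalL]⟩

theorem ext_assemble {S T : PBT} {csm : GTL} {j : ℕ} {m M : PBT}
    (hST : PBT.le S T) (hS : S ≠ leaf) (hlen : lenGTL csm = PBT.nleaves S)
    (hW : WFL csm) (hj1 : 1 ≤ j) (hjlt : j < lenGTL csm)
    (hm : m ≠ leaf) (hmM : PBT.le m M)
    (hg1 : ((evalL csm).map Prod.fst).getD j leaf = leaf)
    (hg2 : ((evalL csm).map Prod.snd).getD j leaf = leaf) :
    ExtAt (PBT.subst S (((evalL csm).map Prod.fst).set j m))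
          (PBT.subst T (((evalL csm).map Prod.snd).set j M)) := by
  have hlm : ((evalL csm).map Prod.fst).length = PBT.nleaves S := by
    simp [length_evalL, hlen]
  have hlM : ((evalL csm).map Prod.snd).length = PBT.nleaves T := by
    simp [length_evalL, hlen, ← PBT.nleaves_le hST]
  have hjm : j < ((evalL csm).map Prod.fst).length := by
    simp [length_evalL]; exact hjlt
  have hjM : j < ((evalL csm).map Prod.snd).length := by
    simp [length_evalL]; exact hjlt
  have e1 := PBT.subst_one S _ j m hlm hjm hg1
  have e2 := PBT.subst_one T _ j M hlM hjM hg2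
  have hoff : PBT.off ((evalL csm).map Prod.snd) j
      = PBT.off ((evalL csm).map Prod.fst) j := (off_eq (wfl_nleaves hW) j).symm
  rw [e1, e2, hoff]
  refine ⟨PBT.off ((evalL csm).map Prod.fst) j, m, M,
    PBT.subst S ((evalL csm).map Prod.fst), PBT.subst T ((evalL csm).map Prod.snd),
    ?_, ?_, hm, hmM, ?_, ?_, rfl, rfl⟩
  · exact PBT.off_pos hj1 (by intro hc; rw [hc] at hjm; simp at hjm)
  · rw [PBT.nleaves_subst S hlm]
    exact PBT.off_lt hjm
  · exact PBT.le_trans (PBT.le_subst_right S (pointwise_le (wfl_le hW)))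
      (PBT.le_subst_left hST _)
  · rw [← hoff, ← e2]
    obtain ⟨k, rfl⟩ : ∃ k, j = k + 1 := ⟨j - 1, by omega⟩
    have l1 := PBT.Lb_subst T ((evalL csm).map Prod.snd)
    have l2 := PBT.Lb_subst T (((evalL csm).map Prod.snd).set (k+1) M)
    rw [headD_set] at l2
    omega

theorem main_ext : ∀ G : GT, WFGT G → ¬ LeftComb G → ExtAt (evalGT G).1 (evalGT G).2
  | .node S T cs, hWF, hLC => by
    cases hWF with
    | node hST hS hlen hW =>
      by_cases hall : allLeafL cs
      · exact absurd (LeftComb.base hall) hLC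
      cases cs with
      | nil => exact absurd trivial hall
      | consLeaf cs' =>
        cases hW with
        | consLeaf hW' =>
          obtain ⟨csm, j, m, M, b1, b2, b3, b4, b5, b6, b7, b8, b9⟩ :=
            zap cs' hW' (fun hc => hall hc)
          have e1 : (evalL (GTL.consLeaf cs')).map Prod.fst
              = ((evalL (GTL.consLeaf csm)).map Prod.fst).set (j+1) m := by
            simp [evalL, b6]
          have e2 : (evalL (GTL.consLeaf cs')).map Prod.snd
              = ((evalL (GTL.consLeaf csm)).map Prod.snd).set (j+1) M := by
            simp [evalL, b7]
          simp only [evalGT, e1, e2]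
          exact ext_assemble hST hS
            (by simp only [lenGTL, b2]; simpa [lenGTL] using hlen)
            (.consLeaf b1) (by omega) (by simp only [lenGTL]; omega) b4 b5
            (by simpa [evalL] using b8) (by simpa [evalL] using b9)
      | consNode g cs' =>
        cases hW with
        | consNode hg hW' =>
          by_cases hall' : allLeafL cs'
          · -- the only internal child is the first one: recurse
            have hLCg : ¬ LeftComb g := fun hc => hLC (LeftComb.step hc hall')
            have hext := main_ext g hg hLCg
            have hleaves : ∀ x ∈ (evalL cs').map Prod.fst, x = leaf := by
              intro x hx
              obtain ⟨pr, hpr, rfl⟩ := List.mem_map.1 hx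
              rw [allLeaf_evalL cs' hall' pr hpr]
            have hleaves' : ∀ x ∈ (evalL cs').map Prod.snd, x = leaf := by
              intro x hx
              obtain ⟨pr, hpr, rfl⟩ := List.mem_map.1 hx
              rw [allLeaf_evalL cs' hall' pr hpr]
            have e1 : (evalGT (GT.node S T (.consNode g cs'))).1
                = PBT.graftL (evalGT g).1 S := by
              simp only [evalGT, evalL, List.map_cons]
              rw [PBT.subst_cons_graft, PBT.subst_leaves]
              intro x hx
              rcases List.mem_cons.1 hx with rfl | hx
              · rfl
              · exact hleaves x hx
            have e2 : (evalGT (GT.node S T (.consNode g cs'))).2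
                = PBT.graftL (evalGT g).2 T := by
              simp only [evalGT, evalL, List.map_cons]
              rw [PBT.subst_cons_graft, PBT.subst_leaves]
              intro x hx
              rcases List.mem_cons.1 hx with rfl | hx
              · rfl
              · exact hleaves' x hx
            rw [e1, e2]
            exact ext_graft hST hext
          · obtain ⟨csm, j, m, M, b1, b2, b3, b4, b5, b6, b7, b8, b9⟩ :=
              zap cs' hW' hall'
            have e1 : (evalL (GTL.consNode g cs')).map Prod.fst
                = ((evalL (GTL.consNode g csm)).map Prod.fst).set (j+1) m := by
              simp [evalL, b6]
            have e2 : (evalL (GTL.consNode g cs')).map Prod.snd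
                = ((evalL (GTL.consNode g csm)).map Prod.snd).set (j+1) M := by
              simp [evalL, b7]
            simp only [evalGT, e1, e2]
            exact ext_assemble hST hS
              (by simp only [lenGTL, b2]; simpa [lenGTL] using hlen)
              (.consNode hg b1) (by omega) (by simp only [lenGTL]; omega) b4 b5
              (by simpa [evalL] using b8) (by simpa [evalL] using b9)

/-- `n` leaf children prepended to a children list. -/
def consLeafs : ℕ → GTL → GTL
  | 0, t => t
  | n+1, t => .consLeaf (consLeafs n t)

theorem lenGTL_consLeafs (n : ℕ) (t : GTL) : lenGTL (consLeafs n t) = n + lenGTL t := by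
  induction n with
  | zero => simp [consLeafs]
  | succ n ih => simp only [consLeafs, lenGTL, ih]; omega

theorem WFL_consLeafs (n : ℕ) {t : GTL} (h : WFL t) : WFL (consLeafs n t) := by
  induction n with
  | zero => exact h
  | succ n ih => exact .consLeaf ih

theorem evalL_consLeafs (n : ℕ) (t : GTL) :
    evalL (consLeafs n t) = List.replicate n (leaf, leaf) ++ evalL t := by
  induction n with
  | zero => rfl
  | succ n ih => simp [consLeafs, evalL, ih, List.replicate_succ]

theorem numNodesL_consLeafs (n : ℕ) (t : GTL) :
    numNodesL (consLeafs n t) = numNodesL t := by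
  induction n with
  | zero => rfl
  | succ n ih => simpa [consLeafs, numNodesL] using ih

theorem newExt_contra {A B : PBT} (s : ℕ) (hs : s < PBT.Lb B) (hext : ExtAt A B) :
    ∃ H : GT, WFGT H ∧ 2 ≤ numNodes H ∧ evalGT H = (node leaf A, PBT.addLeft s B) := by
  obtain ⟨p, m, M, Am, Bm, hp1, hplt, hm, hmM, hAB, hLb, hA, hB⟩ := hext
  have hsB : s < PBT.Lb Bm := by rw [hLb]; exact hs
  set inner : GT := GT.node m M (consLeafs (PBT.nleaves m) .nil) with hinner
  have einner : evalGT inner = (m, M) := by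
    rw [hinner]
    simp only [evalGT, evalL_consLeafs, evalL, List.append_nil, List.map_replicate]
    rw [PBT.subst_leaves m (fun x hx => (List.eq_of_mem_replicate hx)),
        PBT.subst_leaves M (fun x hx => (List.eq_of_mem_replicate hx))]
  set r := PBT.nleaves Am - (p+1) with hr
  set csH : GTL := consLeafs (p+1) (.consNode inner (consLeafs r .nil)) with hcsH
  have hevalL : evalL csH = List.replicate (p+1) (leaf, leaf)
      ++ (m, M) :: List.replicate r (leaf, leaf) := by
    rw [hcsH, evalL_consLeafs]
    simp [evalL, einner, evalL_consLeafs]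
  have hmins : (evalL csH).map Prod.fst
      = leaf :: ((List.replicate p leaf ++ [m]) ++ List.replicate r leaf) := by
    rw [hevalL]
    simp [List.replicate_succ]
  have hmaxs : (evalL csH).map Prod.snd
      = leaf :: ((List.replicate p leaf ++ [M]) ++ List.replicate r leaf) := by
    rw [hevalL]
    simp [List.replicate_succ]
  refine ⟨GT.node (node leaf Am) (PBT.addLeft s Bm) csH, ?_, ?_, ?_⟩
  · refine WFGT.node ?_ (by intro h; cases h) ?_ ?_
    · exact PBT.le_trans (PBT.le_node_right _ hAB) (PBT.addLeft_ge Bm s hsB)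
    · rw [hcsH]
      simp only [lenGTL_consLeafs, lenGTL, PBT.nleaves]
      omega
    · rw [hcsH]
      refine WFL_consLeafs _ (.consNode ?_ (WFL_consLeafs _ .nil))
      exact WFGT.node hmM hm (by simp [lenGTL_consLeafs, lenGTL]) (WFL_consLeafs _ .nil)
  · simp only [numNodes, hcsH, numNodesL_consLeafs, numNodesL, hinner]
    omega
  · simp only [evalGT, hmins, hmaxs]
    rw [PBT.subst_node_leaf, PBT.subst_addLeft hsB,
        PBT.subst_append_replicate, PBT.subst_append_replicate]
    rw [show PBT.subst Am (List.replicate p leaf ++ [m]) = PBT.substOne Am p m from rfl,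
        show PBT.subst Bm (List.replicate p leaf ++ [M]) = PBT.substOne Bm p M from rfl,
        hA, hB]

end SchemeLemmas

/-- If `Y *ₛ K` is new, then every découpage en nouveaux of `K` is of the form
`K₁ / ⋯ / K_k` with all `Kᵢ` new: all graftings occur along the left border. -/
theorem decoupage_of_new_extension_is_left_comb (K : PBT × PBT)
    (hK : isItv K) (hK1 : K.1 ≠ PBT.leaf) (s : ℕ) (hs : s < PBT.Lb K.2)
    (hnew : NewItv (PBT.node PBT.leaf K.1, PBT.addLeft s K.2)) :
    ∀ G : GT, WFGT G → AllNewGT G → evalGT G = K → LeftComb G := by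
  intro G hWF _ hEval
  by_contra hLC
  have hext : ExtAt K.1 K.2 := by
    have := main_ext G hWF hLC
    rwa [hEval] at this
  obtain ⟨H, h1, h2, h3⟩ := newExt_contra s hs hext
  exact hnew.2.2 ⟨H, h1, h2, h3⟩
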